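/- In the setting of the previous statement, suppose additionally that f belongs to the span E_ω(L) of eigenvectors of L with eigenvalue ≤ ω. Then for every m ∈ ℕ and every multi-index (i₁,…,i_m) with entries in {1,…,d}, ‖D_{i₁}⋯D_{i_m} f‖ ≤ ω^{m/2} ‖f‖. -/
import Mathlib


open scoped InnerProductSpace

/-- If moreover `f` belongs to the span `E_ω(L)` of eigenvectors of `L = −∑ⱼ Dⱼ²`
with eigenvalue `≤ ω`, then `‖D_{i₁}⋯D_{i_m} f‖ ≤ ω^{m/2} ‖f‖` for every
multi-index with entries in `{1,…,d}`. -/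
theorem stmt11 {H : Type*} [NormedAddCommGroup H] [InnerProductSpace ℂ H] [CompleteSpace H]
    {d : ℕ} (D : Fin d → H →ₗ[ℂ] H)
    (hskew : ∀ j : Fin d, ∀ x y : H, ⟪D j x, y⟫_ℂ = -⟪x, D j y⟫_ℂ)
    (L : H →ₗ[ℂ] H) (hL : L = -(∑ j : Fin d, D j ∘ₗ D j))
    (hcomm : ∀ j : Fin d, L ∘ₗ D j = D j ∘ₗ L)
    (u : ℕ → H) (lam : ℕ → ℝ) (hlamnn : ∀ m, 0 ≤ lam m)
    (heig : ∀ m, L (u m) = (lam m : ℂ) • u m)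
    (ω : ℝ) (hω : 0 ≤ ω) (f : H)
    (hf : f ∈ Submodule.span ℂ {x : H | ∃ m, lam m ≤ ω ∧ x = u m}) :
    ∀ (m : ℕ) (i : Fin m → Fin d),
      ‖(List.ofFn i).foldr (fun j x => D j x) f‖ ≤ ω ^ ((m : ℝ) / 2) * ‖f‖ := by
  -- inner product identities
  have hIP : ∀ x y : H, ⟪L x, y⟫_ℂ = ∑ j : Fin d, ⟪D j x, D j y⟫_ℂ := by
    intro x y
    rw [hL]
    simp only [LinearMap.neg_apply, LinearMap.coe_sum, Finset.sum_apply,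
      LinearMap.comp_apply, inner_neg_left, sum_inner]
    rw [← Finset.sum_neg_distrib]
    exact Finset.sum_congr rfl fun j _ => by rw [hskew j (D j x) y]; ring
  have hIP2 : ∀ x y : H, ⟪x, L y⟫_ℂ = ∑ j : Fin d, ⟪D j x, D j y⟫_ℂ := by
    intro x y
    rw [hL]
    simp only [LinearMap.neg_apply, LinearMap.coe_sum, Finset.sum_apply,
      LinearMap.comp_apply, inner_neg_right, inner_sum]
    rw [← Finset.sum_neg_distrib]
    exact Finset.sum_congr rfl fun j _ => by rw [← hskew j x (D j y)]
  have hsym : ∀ x y : H, ⟪L x, y⟫_ℂ = ⟪x, L y⟫_ℂ := fun x y => by rw [hIP, hIP2]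
  -- orthogonality of eigenvectors with distinct eigenvalues
  have horth : ∀ (s t : ℝ) (y z : H), L y = (s : ℂ) • y → L z = (t : ℂ) • z → s ≠ t →
      ⟪y, z⟫_ℂ = 0 := by
    intro s t y z hy hz hst
    have h := hsym y z
    rw [hy, hz, inner_smul_left, inner_smul_right, Complex.conj_ofReal] at h
    have h2 : ((s : ℂ) - t) * ⟪y, z⟫_ℂ = 0 := by rw [sub_mul, h]; ring
    have h3 : ((s : ℂ) - t) ≠ 0 := by
      simpa [sub_eq_zero] using fun h' => hst (by exact_mod_cast h')
    exact (mul_eq_zero.mp h2).resolve_left h3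
  -- the set of eigenvectors with eigenvalue ≤ ω
  set E : Set H := {x : H | ∃ r : ℝ, r ≤ ω ∧ L x = (r : ℂ) • x} with hE
  have hf' : f ∈ Submodule.span ℂ E := by
    refine Submodule.span_mono ?_ hf
    rintro x ⟨m, hm, rfl⟩
    exact ⟨lam m, hm, heig m⟩
  -- D j preserves span E
  have hDspan : ∀ (j : Fin d), ∀ x ∈ Submodule.span ℂ E, D j x ∈ Submodule.span ℂ E := by
    intro j x hx
    induction hx using Submodule.span_induction with
    | mem x h =>
      obtain ⟨r, hr, hx⟩ := h
      refine Submodule.subset_span ⟨r, hr, ?_⟩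
      have := congrArg (fun T : H →ₗ[ℂ] H => T x) (hcomm j)
      simp only [LinearMap.comp_apply] at this
      rw [this, hx, map_smul]
    | zero => simp
    | add a b _ _ ha hb => rw [map_add]; exact Submodule.add_mem _ ha hb
    | smul c a _ ha => rw [map_smul]; exact Submodule.smul_mem _ _ ha
  -- quadratic form bound on span E
  have hquad : ∀ x ∈ Submodule.span ℂ E, (⟪x, L x⟫_ℂ).re ≤ ω * ‖x‖ ^ 2 := by
    intro x hx
    obtain ⟨n, c, v, hxe⟩ := Submodule.mem_span_set'.mp hx
    choose r hrω hre using fun i : Fin n => (v i).2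
    set z : ℝ → H := fun t => ∑ i ∈ Finset.univ.filter (fun i => r i = t), c i • (v i : H)
      with hz
    set T : Finset ℝ := Finset.image r Finset.univ with hT
    have hxz : x = ∑ t ∈ T, z t := by
      rw [← hxe, hz, hT]
      rw [Finset.sum_fiberwise_of_maps_to (fun i _ => Finset.mem_image_of_mem r (Finset.mem_univ i))]
    have hzeig : ∀ t : ℝ, L (z t) = (t : ℂ) • z t := by
      intro t
      rw [hz]
      simp only [map_sum, map_smul, Finset.smul_sum]
      refine Finset.sum_congr rfl fun i hi => ?_
      rw [hre i, (Finset.mem_filter.mp hi).2, smul_comm]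
    have hdiag : ∀ s ∈ T, ∀ t ∈ T, s ≠ t → ⟪z s, z t⟫_ℂ = 0 :=
      fun s _ t _ hst => horth s t (z s) (z t) (hzeig s) (hzeig t) hst
    -- ⟪x, L x⟫ = ∑ t, t * ⟪z t, z t⟫
    have hip : ⟪x, L x⟫_ℂ = ∑ t ∈ T, (t : ℂ) * ⟪z t, z t⟫_ℂ := by
      rw [hxz, map_sum]
      simp only [sum_inner, inner_sum]
      rw [Finset.sum_comm]
      refine Finset.sum_congr rfl fun t ht => ?_
      rw [Finset.sum_eq_single t
        (fun s hs hst => by rw [hzeig s, inner_smul_right, hdiag t ht s hs (Ne.symm hst), mul_zero])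
        (fun h => absurd ht h)]
      rw [hzeig t, inner_smul_right]
    have hnorm : ‖x‖ ^ 2 = ∑ t ∈ T, (⟪z t, z t⟫_ℂ).re := by
      have hdd : ⟪(∑ s ∈ T, z s : H), (∑ t ∈ T, z t : H)⟫_ℂ = ∑ t ∈ T, ⟪z t, z t⟫_ℂ := by
        simp only [sum_inner, inner_sum]
        refine Finset.sum_congr rfl fun t ht => ?_
        exact Finset.sum_eq_single t
          (fun s hs hst => hdiag s hs t ht hst)
          (fun h => absurd ht h)
      rw [← inner_self_eq_norm_sq (𝕜 := ℂ) x, hxz, hdd, RCLike.re_to_complex, Complex.re_sum]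
    rw [hip, Complex.re_sum, hnorm, Finset.mul_sum]
    refine Finset.sum_le_sum fun t ht => ?_
    obtain ⟨i, _, rfl⟩ := Finset.mem_image.mp ht
    have h1 : ((r i : ℂ) * ⟪z (r i), z (r i)⟫_ℂ).re = r i * (⟪z (r i), z (r i)⟫_ℂ).re := by
      simp [Complex.mul_re, Complex.ofReal_re, Complex.ofReal_im]
    rw [h1]
    have h2 : 0 ≤ (⟪z (r i), z (r i)⟫_ℂ).re := by
      simpa using inner_self_nonneg (𝕜 := ℂ) (x := z (r i))
    exact mul_le_mul_of_nonneg_right (hrω i) h2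
  -- key step: ‖D j x‖ ≤ √ω ‖x‖ on span E
  have hstep : ∀ (j : Fin d), ∀ x ∈ Submodule.span ℂ E, ‖D j x‖ ≤ Real.sqrt ω * ‖x‖ := by
    intro j x hx
    have h2 : (∑ k : Fin d, ‖D k x‖ ^ 2 : ℝ) = (⟪x, L x⟫_ℂ).re := by
      rw [hIP2, Complex.re_sum]
      exact Finset.sum_congr rfl fun k _ => by
        rw [← inner_self_eq_norm_sq (𝕜 := ℂ) (D k x), RCLike.re_to_complex]
    have h1 : ‖D j x‖ ^ 2 ≤ ∑ k : Fin d, ‖D k x‖ ^ 2 :=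
      Finset.single_le_sum (f := fun k => ‖D k x‖ ^ 2) (fun k _ => sq_nonneg _)
        (Finset.mem_univ j)
    have h3 : ‖D j x‖ ^ 2 ≤ (Real.sqrt ω * ‖x‖) ^ 2 := by
      rw [mul_pow, Real.sq_sqrt hω]
      calc ‖D j x‖ ^ 2 ≤ (⟪x, L x⟫_ℂ).re := h2 ▸ h1
        _ ≤ ω * ‖x‖ ^ 2 := hquad x hx
    have h4 : (0 : ℝ) ≤ Real.sqrt ω * ‖x‖ := mul_nonneg (Real.sqrt_nonneg ω) (norm_nonneg x)
    nlinarith [norm_nonneg (D j x)]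
  -- the strengthened induction
  have main : ∀ (m : ℕ) (i : Fin m → Fin d),
      (List.ofFn i).foldr (fun j x => D j x) f ∈ Submodule.span ℂ E ∧
      ‖(List.ofFn i).foldr (fun j x => D j x) f‖ ≤ Real.sqrt ω ^ m * ‖f‖ := by
    intro m
    induction m with
    | zero => intro i; simpa using hf'
    | succ n ih =>
      intro i
      rw [List.ofFn_succ]
      simp only [List.foldr_cons]
      obtain ⟨hmem, hnorm⟩ := ih (fun k => i k.succ)
      refine ⟨hDspan _ _ hmem, ?_⟩
      calc ‖D (i 0) ((List.ofFn fun k => i k.succ).foldr (fun j x => D j x) f)‖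
          ≤ Real.sqrt ω * ‖(List.ofFn fun k => i k.succ).foldr (fun j x => D j x) f‖ :=
            hstep _ _ hmem
        _ ≤ Real.sqrt ω * (Real.sqrt ω ^ n * ‖f‖) :=
            mul_le_mul_of_nonneg_left hnorm (Real.sqrt_nonneg ω)
        _ = Real.sqrt ω ^ (n + 1) * ‖f‖ := by ring
  intro m i
  have hpow : ω ^ ((m : ℝ) / 2) = Real.sqrt ω ^ m := by
    rw [Real.sqrt_eq_rpow, ← Real.rpow_natCast (ω ^ ((1 : ℝ) / 2)) m, ← Real.rpow_mul hω,
      show (1 : ℝ) / 2 * (m : ℕ) = (m : ℝ) / 2 by ring]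
  rw [hpow]
  exact (main m i).2
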